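/- Let (μ_n) be a sequence of probability measures on a measurable space, and let A, B, C be measurable sets. Define the conditional probability cond(μ, X, Y) to be μ(X ∩ Y)/μ(Y) if μ(Y) > 0, and 1 if μ(Y) = 0. If the sequences n ↦ cond(μ_n, A, C) and n ↦ cond(μ_n, B, C) both converge super-polynomially to 1, then so does n ↦ cond(μ_n, A ∩ B, C). (Soundness of the AND rule / axiom C2 for super-polynomial semantics.) -/

import Mathlib

open MeasureTheory Filter Set

/-- Super-polynomial convergence to 1: for every polynomial with nonnegative
coefficients and at least one nonzero coefficient, eventually `a n ≥ 1 - 1/p(n)`. -/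
def SuperPoly (a : ℕ → ℝ) : Prop :=
  ∀ p : Polynomial ℝ, (∀ i, 0 ≤ p.coeff i) → p ≠ 0 →
    ∃ N : ℕ, ∀ n ≥ N, a n ≥ 1 - 1 / p.eval (n : ℝ)

/-- Conditional probability with the convention `condProb μ X Y = 1` when `μ Y = 0`. -/
noncomputable def condProb {Ω : Type*} [MeasurableSpace Ω] (μ : Measure Ω) (X Y : Set Ω) : ℝ :=
  if μ Y = 0 then 1 else (μ (X ∩ Y)).toReal / (μ Y).toReal

lemma condProb_inter_ge {Ω : Type*} [MeasurableSpace Ω] (μ : Measure Ω)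
    [IsProbabilityMeasure μ] (A B C : Set Ω) (hA : MeasurableSet A) (hB : MeasurableSet B) (hC : MeasurableSet C) :
    condProb μ (A ∩ B) C ≥ condProb μ A C + condProb μ B C - 1 := by
  unfold condProb
  by_cases h : μ C = 0
  · simp [h]
  · simp only [h, if_false]
    have hCfin : μ C ≠ ⊤ := measure_ne_top μ C
    have hc : 0 < (μ C).toReal := ENNReal.toReal_pos h hCfin
    rw [ge_iff_le, sub_le_iff_le_add, ← add_div, div_add' _ _ _ (ne_of_gt hc),
      div_le_div_iff_of_pos_right hc]
    have key : μ (A ∩ C) + μ (B ∩ C) ≤ μ (A ∩ B ∩ C) + μ C := by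
      have h1 : μ (A ∩ C) + μ (B ∩ C) = μ ((A ∩ C) ∪ (B ∩ C)) + μ ((A ∩ C) ∩ (B ∩ C)) :=
        (measure_union_add_inter _ (hB.inter hC)).symm
      have h2 : (A ∩ C) ∩ (B ∩ C) = A ∩ B ∩ C := by ext x; simp; tauto
      have h3 : μ ((A ∩ C) ∪ (B ∩ C)) ≤ μ C := by
        apply measure_mono; intro x hx; rcases hx with h | h <;> exact h.2
      calc μ (A ∩ C) + μ (B ∩ C) = μ ((A ∩ C) ∪ (B ∩ C)) + μ (A ∩ B ∩ C) := by rw [h1, h2]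
        _ ≤ μ C + μ (A ∩ B ∩ C) := by gcongr
        _ = μ (A ∩ B ∩ C) + μ C := add_comm _ _
    have := ENNReal.toReal_mono (by finiteness) key
    rw [ENNReal.toReal_add (by finiteness) (by finiteness),
      ENNReal.toReal_add (by finiteness) hCfin] at this
    linarith

theorem stmt_2 {Ω : Type*} [MeasurableSpace Ω] (μ : ℕ → Measure Ω)
    (hμ : ∀ n, IsProbabilityMeasure (μ n))
    (A B C : Set Ω) (hA : MeasurableSet A) (hB : MeasurableSet B)
    (hC : MeasurableSet C)
    (h1 : SuperPoly (fun n => condProb (μ n) A C))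
    (h2 : SuperPoly (fun n => condProb (μ n) B C)) :
    SuperPoly (fun n => condProb (μ n) (A ∩ B) C) := by
  intro p hp hp0
  have hq : ∀ i, 0 ≤ (2 * p).coeff i := by
    intro i
    rw [Polynomial.coeff_ofNat_mul]
    linarith [hp i]
  have hq0 : (2 : Polynomial ℝ) * p ≠ 0 := by
    simp [hp0]
  obtain ⟨N1, hN1⟩ := h1 (2 * p) hq hq0
  obtain ⟨N2, hN2⟩ := h2 (2 * p) hq hq0
  refine ⟨max N1 N2, fun n hn => ?_⟩
  have e1 := hN1 n (le_trans (le_max_left _ _) hn)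
  have e2 := hN2 n (le_trans (le_max_right _ _) hn)
  simp only [Polynomial.eval_mul, Polynomial.eval_ofNat] at e1 e2
  haveI := hμ n
  have key := condProb_inter_ge (μ n) A B C hA hB hC
  have hsum : 1 / (2 * p.eval (n : ℝ)) + 1 / (2 * p.eval (n : ℝ)) = 1 / p.eval (n : ℝ) := by
    rcases eq_or_ne (p.eval (n : ℝ)) 0 with h | h
    · simp [h]
    · field_simp
      ring_nf
  simp only [ge_iff_le] at *
  linarith
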